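/- The nerve of an acyclic category is a non-singular simplicial set: if C is a category in which every endomorphism is an identity and every isomorphism is an identity (e.g., a poset), then for every non-degenerate n-simplex x of the nerve N(C), the associated simplicial map Δⁿ → N(C) is injective in every degree. -/

import Mathlib

open CategoryTheory Simplicial

/-- A simplex `x ∈ X_n` is non-degenerate: it is not in the image of `X(g)` for any
map `g : [n] → [k]` with `k < n` (equivalently, it is not a degeneracy). -/
def SSet.Nondeg (X : SSet) {n : ℕ} (x : X _⦋n⦌) : Prop :=
  ∀ (k : ℕ), k < n → ∀ (g : (⦋n⦌ : SimplexCategory) ⟶ ⦋k⦌) (y : X _⦋k⦌),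
    X.map g.op y ≠ x

lemma map_cast_aux {C : Type*} [Category C] {n : ℕ} (x : (nerve C) _⦋n⦌)
    {p q p' q' : Fin (n+1)} (hpq : p ≤ q) (h1 : p = p') (h2 : q = q')
    (hp'q' : p' ≤ q') :
    x.map (homOfLE hpq) =
      eqToHom (congrArg x.obj h1) ≫ x.map (homOfLE hp'q') ≫
        eqToHom (congrArg x.obj h2).symm := by
  subst h1 h2
  simp

/-- The nerve of an acyclic category is non-singular: for every non-degenerate
`n`-simplex `x` of `N(C)`, the characteristic map `Δⁿ → N(C)` is injective in every
degree, i.e. `g ↦ N(C)(g)(x)` is injective on `Hom([k],[n])` for all `k`. -/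
theorem nerve_acyclic_nonSingular (C : Type*) [Category C]
    (hendo : ∀ (x : C) (f : x ⟶ x), f = 𝟙 x)
    (hacyclic : ∀ ⦃x y : C⦄, (x ⟶ y) → (y ⟶ x) → x = y)
    (n : ℕ) (x : (nerve C) _⦋n⦌) (hx : SSet.Nondeg (nerve C) x) :
    ∀ (k : ℕ) (g₁ g₂ : (⦋k⦌ : SimplexCategory) ⟶ ⦋n⦌),
      (nerve C).map g₁.op x = (nerve C).map g₂.op x → g₁ = g₂ := by
  have key : ∀ a b : Fin (n+1), a < b → x.obj a ≠ x.obj b := by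
    intro a b hab heq
    have han : (a : ℕ) < n := lt_of_lt_of_le hab (Nat.lt_succ_iff.mp b.isLt)
    set a1 : Fin (n+1) := ⟨(a : ℕ) + 1, by omega⟩ with ha1
    have haa1 : a ≤ a1 := by simp [ha1, Fin.le_def]
    have ha1b : a1 ≤ b := by
      simp only [ha1, Fin.le_def]
      exact hab
    have f1 : x.obj a ⟶ x.obj a1 := x.map (homOfLE haa1)
    have f2 : x.obj a1 ⟶ x.obj b := x.map (homOfLE ha1b)
    have h1 : x.obj a = x.obj a1 := hacyclic f1 (f2 ≫ eqToHom heq.symm)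
    have hendo1 : x.map (homOfLE haa1) ≫ eqToHom h1.symm = 𝟙 (x.obj a) :=
      hendo _ _
    have hf1 : x.map (homOfLE haa1) = eqToHom h1 := by
      have := congrArg (· ≫ eqToHom h1) hendo1
      simpa using this
    obtain ⟨m, rfl⟩ := Nat.exists_eq_succ_of_ne_zero (by omega : n ≠ 0)
    set i : Fin (m + 1) := ⟨(a : ℕ), by omega⟩ with hi
    refine hx m (Nat.lt_succ_self m) (SimplexCategory.σ i)
      ((nerve C).map (SimplexCategory.δ i.succ).op x) ?_
    rw [← FunctorToTypes.map_comp_apply, ← op_comp]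
    set e := SimplexCategory.σ i ≫ SimplexCategory.δ i.succ with he
    have hval : ∀ j : Fin (m + 2),
        ((e.toOrderHom j : Fin (m+2)) : ℕ)
          = if (j : ℕ) = (a : ℕ) + 1 then (a : ℕ) else (j : ℕ) := by
      intro j
      rw [he]
      simp only [SimplexCategory.comp_toOrderHom, OrderHom.comp_coe, Function.comp_apply,
        SimplexCategory.σ, SimplexCategory.δ, SimplexCategory.mkHom,
        SimplexCategory.Hom.toOrderHom_mk, OrderEmbedding.toOrderHom_coe]
      rcases j with ⟨jv, hjv⟩
      simp [Fin.predAbove, Fin.succAbove, Fin.lt_def, Fin.le_def, hi]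
      split_ifs <;> first | rfl | omega | (simp_all; omega) | simp_all
    have hobj : ∀ j : Fin (m + 2), x.obj (e.toOrderHom j) = x.obj j := by
      intro j
      by_cases hj : (j : ℕ) = (a : ℕ) + 1
      · have h1' : e.toOrderHom j = a := by
          rw [Fin.ext_iff, hval j, if_pos hj]
        have h2' : j = a1 := Fin.ext hj
        rw [h1', h2']
        exact h1
      · have : e.toOrderHom j = j := by rw [Fin.ext_iff, hval j, if_neg hj]
        rw [this]
    refine ComposableArrows.ext hobj ?_
    intro j hj
    replace hj : j < m + 1 := hj
    have hje : e.toOrderHom ⟨j, Nat.lt_succ_of_lt hj⟩ ≤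
        e.toOrderHom ⟨j + 1, Nat.succ_lt_succ hj⟩ :=
      e.toOrderHom.monotone (by simp [Fin.mk_le_mk])
    have hjx : (⟨j, Nat.lt_succ_of_lt hj⟩ : Fin (m + 2)) ≤ ⟨j + 1, Nat.succ_lt_succ hj⟩ := by
      simp [Fin.mk_le_mk]
    show x.map (homOfLE hje)
      = eqToHom (hobj _) ≫ x.map (homOfLE hjx) ≫ eqToHom (hobj _).symm
    by_cases hja : j = (a : ℕ)
    · have e1 : e.toOrderHom ⟨j, Nat.lt_succ_of_lt hj⟩ = a :=
        Fin.ext (by rw [hval]; simp only [Fin.val_mk]; split_ifs <;> omega)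
      have e2 : e.toOrderHom ⟨j + 1, Nat.succ_lt_succ hj⟩ = a :=
        Fin.ext (by rw [hval]; simp only [Fin.val_mk]; split_ifs <;> omega)
      have w1 : (⟨j, Nat.lt_succ_of_lt hj⟩ : Fin (m + 2)) = a := Fin.ext hja
      have w2 : (⟨j + 1, Nat.succ_lt_succ hj⟩ : Fin (m + 2)) = a1 :=
        Fin.ext (by simp only [ha1, Fin.val_mk]; omega)
      rw [map_cast_aux x hje e1 e2 (le_refl a),
        map_cast_aux x hjx w1 w2 haa1, hf1, hendo _ (x.map (homOfLE (le_refl a)))]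
      simp
    · by_cases hja1 : j = (a : ℕ) + 1
      · have e1 : e.toOrderHom ⟨j, Nat.lt_succ_of_lt hj⟩ = a :=
          Fin.ext (by rw [hval]; simp only [Fin.val_mk]; split_ifs <;> omega)
        have e2 : e.toOrderHom ⟨j + 1, Nat.succ_lt_succ hj⟩ = ⟨j + 1, Nat.succ_lt_succ hj⟩ :=
          Fin.ext (by rw [hval]; simp only [Fin.val_mk]; split_ifs <;> omega)
        have hle : a ≤ (⟨j + 1, Nat.succ_lt_succ hj⟩ : Fin (m + 2)) := by
          simp only [Fin.le_def, Fin.val_mk]; omega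
        have ha1j1 : a1 ≤ (⟨j + 1, Nat.succ_lt_succ hj⟩ : Fin (m + 2)) := by
          simp only [ha1, Fin.le_def, Fin.val_mk]; omega
        have w1 : (⟨j, Nat.lt_succ_of_lt hj⟩ : Fin (m + 2)) = a1 :=
          Fin.ext (by simp only [ha1, Fin.val_mk]; omega)
        rw [map_cast_aux x hje e1 e2 hle,
          map_cast_aux x hjx w1 rfl ha1j1,
          show homOfLE hle = homOfLE haa1 ≫ homOfLE ha1j1 from rfl,
          x.map_comp, hf1]
        simp
      · have e1 : e.toOrderHom ⟨j, Nat.lt_succ_of_lt hj⟩ = ⟨j, Nat.lt_succ_of_lt hj⟩ :=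
          Fin.ext (by rw [hval]; simp only [Fin.val_mk]; split_ifs <;> omega)
        have e2 : e.toOrderHom ⟨j + 1, Nat.succ_lt_succ hj⟩ = ⟨j + 1, Nat.succ_lt_succ hj⟩ :=
          Fin.ext (by rw [hval]; simp only [Fin.val_mk]; split_ifs <;> omega)
        rw [map_cast_aux x hje e1 e2 hjx]
  intro k g₁ g₂ h
  ext i : 3
  have hobj : x.obj (g₁.toOrderHom i) = x.obj (g₂.toOrderHom i) :=
    congrArg (fun F => F.obj i) h
  rcases lt_trichotomy (g₁.toOrderHom i) (g₂.toOrderHom i) with hlt | heq | hgt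
  · exact absurd hobj (key _ _ hlt)
  · exact heq
  · exact absurd hobj.symm (key _ _ hgt)
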